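/- Let E be a finite collection of nonempty subsets of [m] and w_E(J) = #{I ∈ E : I ∩ J ≠ ∅}. Then the Minkowski sum ∑_{I∈E} Δ_I of the simplices Δ_I = conv{e_k : k ∈ I} equals the polytope Q = {x ∈ ℝ^m : ∑_i x_i = w_E([m]), and ∑_{i∈J} x_i ≤ w_E(J) for all nonempty J ⊆ [m]}. -/

import Mathlib

open Pointwise

/-- Points of the simplex `conv{e_k : k ∈ I}` are nonnegative, supported on `I`,
with coordinate sum 1. -/
lemma simplex_mem_props {m : ℕ} (I : Finset (Fin m)) {y : Fin m → ℝ}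
    (hy : y ∈ convexHull ℝ ((fun i => Pi.single i (1 : ℝ)) '' (I : Set (Fin m)))) :
    (∀ i, 0 ≤ y i) ∧ (∀ i, i ∉ I → y i = 0) ∧ ∑ i ∈ I, y i = 1 := by
  classical
  set S : Set (Fin m → ℝ) :=
    {y | (∀ i, 0 ≤ y i) ∧ (∀ i, i ∉ I → y i = 0) ∧ ∑ i ∈ I, y i = 1} with hS
  have hconv : Convex ℝ S := by
    rintro u hu v hv a b ha hb hab
    refine ⟨fun i => add_nonneg (mul_nonneg ha (hu.1 i)) (mul_nonneg hb (hv.1 i)),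
      fun i hi => by simp [hu.2.1 i hi, hv.2.1 i hi], ?_⟩
    have : ∑ i ∈ I, (a * u i + b * v i) = a * ∑ i ∈ I, u i + b * ∑ i ∈ I, v i := by
      rw [Finset.sum_add_distrib, Finset.mul_sum, Finset.mul_sum]
    simpa [this, hu.2.2, hv.2.2] using hab
  have hsub : (fun i => Pi.single i (1 : ℝ)) '' (I : Set (Fin m)) ⊆ S := by
    rintro _ ⟨i, hi, rfl⟩
    refine ⟨fun j => ?_, fun j hj => ?_, ?_⟩
    · rcases eq_or_ne j i with rfl | h
      · simp
      · simp [Pi.single_apply, h]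
    · have : j ≠ i := fun h => hj (h ▸ hi)
      simp [Pi.single_apply, this]
    · rw [Finset.sum_congr rfl (fun j _ => Pi.single_apply i (1:ℝ) j)]
      simp [Finset.sum_ite_eq' I i (fun _ => (1:ℝ)), Finset.mem_coe.mp hi]
  exact convexHull_min hsub hconv hy

/-- The Minkowski sum of the simplices is compact and convex. -/
lemma lhs_compact_convex {m : ℕ} (E : Finset (Finset (Fin m))) :
    IsCompact (∑ I ∈ E, convexHull ℝ ((fun i => Pi.single i (1 : ℝ)) '' (I : Set (Fin m)))) ∧
    Convex ℝ (∑ I ∈ E, convexHull ℝ ((fun i => Pi.single i (1 : ℝ)) '' (I : Set (Fin m)))) := by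
  classical
  induction E using Finset.cons_induction with
  | empty =>
    rw [Finset.sum_empty]
    exact ⟨isCompact_singleton,
      convex_singleton 0⟩
  | cons I s hI ih =>
    rw [Finset.sum_cons]
    exact ⟨((((I : Set (Fin m)).toFinite.image _).isCompact_convexHull ℝ)).add ih.1,
      (convex_convexHull ℝ _).add ih.2⟩

/-- The greedy/Lovász-extension bound: any linear functional is bounded on the polytope by
its value at the greedy point. -/
lemma key_ineq {m : ℕ} (hm : 0 < m) (E : Finset (Finset (Fin m)))
    (hE : ∀ I ∈ E, I.Nonempty)
    (w : Finset (Fin m) → ℕ)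
    (hw : ∀ J, w J = (E.filter (fun I => (I ∩ J).Nonempty)).card)
    (c x : Fin m → ℝ)
    (h1 : ∑ i, x i = (w Finset.univ : ℝ))
    (h2 : ∀ J : Finset (Fin m), J.Nonempty → ∑ i ∈ J, x i ≤ (w J : ℝ))
    (a : Finset (Fin m) → Fin m)
    (haI : ∀ I ∈ E, a I ∈ I)
    (hamax : ∀ I ∈ E, ∀ i ∈ I, c i ≤ c (a I)) :
    ∑ i, c i * x i ≤ ∑ I ∈ E, c (a I) := by
  classical
  have hm1 : m - 1 < m := Nat.sub_lt hm one_pos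
  set τ := Tuple.sort c with hτ
  have hmono : Monotone (c ∘ τ) := Tuple.monotone_sort c
  set g : ℕ → ℝ := fun j => c (τ ⟨min j (m-1), lt_of_le_of_lt (min_le_right _ _) hm1⟩) with hg
  have hgmono : Monotone g := by
    intro j k hjk
    exact hmono (Fin.mk_le_mk.2 (min_le_min hjk le_rfl))
  set d : ℕ → ℝ := fun j => g (j+1) - g j with hd
  have hd0 : ∀ j, 0 ≤ d j := fun j => sub_nonneg.2 (hgmono (Nat.le_succ j))
  set ρ : Fin m → ℕ := fun i => ((τ.symm i : Fin m) : ℕ) with hρ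
  have hρle : ∀ i, ρ i ≤ m - 1 := fun i => Nat.le_sub_one_of_lt (τ.symm i).isLt
  have hgc : ∀ i, c i = g (ρ i) := by
    intro i
    have h : (⟨min (ρ i) (m-1), lt_of_le_of_lt (min_le_right _ _) hm1⟩ : Fin m) = τ.symm i :=
      Fin.ext (by simp [min_eq_left (hρle i)]; rfl)
    simp only [hg, h, Equiv.apply_symm_apply]
  have hci : ∀ i, c i = g 0 + ∑ j ∈ Finset.range (m-1), (if j < ρ i then d j else 0) := by
    intro i
    have ht : ∑ j ∈ Finset.range (ρ i), d j = g (ρ i) - g 0 := Finset.sum_range_sub g (ρ i)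
    have hfil : ∑ j ∈ Finset.range (m-1), (if j < ρ i then d j else 0)
        = ∑ j ∈ Finset.range (ρ i), d j := by
      rw [← Finset.sum_filter]
      congr 1
      ext j
      simp only [Finset.mem_filter, Finset.mem_range]
      have := hρle i
      omega
    rw [hfil, ht, hgc i]; ring
  set T : ℕ → Finset (Fin m) := fun j => Finset.univ.filter (fun i => j < ρ i) with hT
  have hTne : ∀ j ∈ Finset.range (m-1), (T j).Nonempty := by
    intro j hj
    refine ⟨τ ⟨m-1, hm1⟩, ?_⟩
    simp only [hT, Finset.mem_filter, Finset.mem_univ, true_and, hρ, Equiv.symm_apply_apply]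
    exact Finset.mem_range.mp hj
  have hwuniv : (w Finset.univ : ℕ) = E.card := by
    rw [hw]
    congr 1
    apply Finset.filter_true_of_mem
    intro I hI
    simpa using hE I hI
  have step1 : ∀ j, (∑ i, (if j < ρ i then d j else 0) * x i) = d j * ∑ i ∈ T j, x i := by
    intro j
    calc ∑ i, (if j < ρ i then d j else 0) * x i
        = ∑ i, (if j < ρ i then d j * x i else 0) :=
          Finset.sum_congr rfl fun i _ => by split <;> ring
      _ = ∑ i ∈ T j, d j * x i := (Finset.sum_filter _ _).symm
      _ = d j * ∑ i ∈ T j, x i := (Finset.mul_sum _ _ _).symm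
  have hindic : ∀ I ∈ E, ∀ j,
      (if j < ρ (a I) then d j else 0) = (if (I ∩ T j).Nonempty then d j else 0) := by
    intro I hI j
    by_cases hlt : j < ρ (a I)
    · have hne : (I ∩ T j).Nonempty :=
        ⟨a I, Finset.mem_inter.2 ⟨haI I hI, by simp [hT, hlt]⟩⟩
      simp [hlt, hne]
    · simp only [if_neg hlt]
      by_cases hne : (I ∩ T j).Nonempty
      · obtain ⟨i, hi⟩ := hne
        rw [Finset.mem_inter] at hi
        have hji : j < ρ i := by simpa [hT] using hi.2
        have e1 : g (j+1) ≤ g (ρ i) := hgmono hji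
        have e2 : g (ρ (a I)) ≤ g j := hgmono (Nat.le_of_not_lt hlt)
        have e3 : g (ρ i) ≤ g (ρ (a I)) := by
          rw [← hgc i, ← hgc (a I)]; exact hamax I hI i hi.1
        have : d j = 0 := le_antisymm (by simp only [hd]; linarith) (hd0 j)
        simp [this]
      · simp [hne]
  have hsumite : ∀ j, (∑ I ∈ E, (if (I ∩ T j).Nonempty then d j else 0))
      = d j * (w (T j) : ℝ) := by
    intro j
    rw [← Finset.sum_filter, Finset.sum_const, hw (T j), nsmul_eq_mul, mul_comm]
  calc ∑ i, c i * x i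
      = g 0 * (∑ i, x i) + ∑ j ∈ Finset.range (m-1), d j * ∑ i ∈ T j, x i := by
        rw [Finset.mul_sum]
        rw [show (∑ j ∈ Finset.range (m-1), d j * ∑ i ∈ T j, x i)
            = ∑ j ∈ Finset.range (m-1), ∑ i, (if j < ρ i then d j else 0) * x i from
          Finset.sum_congr rfl fun j _ => (step1 j).symm]
        rw [Finset.sum_comm, ← Finset.sum_add_distrib]
        exact Finset.sum_congr rfl fun i _ => by rw [hci i, add_mul, Finset.sum_mul]
    _ ≤ g 0 * (w Finset.univ : ℝ) + ∑ j ∈ Finset.range (m-1), d j * (w (T j) : ℝ) := by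
        rw [h1]
        gcongr with j hj
        · exact hd0 j
        · exact h2 (T j) (hTne j hj)
    _ = ∑ I ∈ E, c (a I) := by
        have hconst : g 0 * (w Finset.univ : ℝ) = ∑ _I ∈ E, g 0 := by
          rw [Finset.sum_const, hwuniv, nsmul_eq_mul, mul_comm]
        rw [hconst]
        rw [show (∑ j ∈ Finset.range (m-1), d j * (w (T j) : ℝ))
            = ∑ j ∈ Finset.range (m-1), ∑ I ∈ E, (if j < ρ (a I) then d j else 0) from
          Finset.sum_congr rfl fun j _ => by
            rw [← hsumite j]
            exact Finset.sum_congr rfl fun I hI => (hindic I hI j).symm]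
        rw [Finset.sum_comm, ← Finset.sum_add_distrib]
        exact Finset.sum_congr rfl fun I _ => (hci (a I)).symm

/-- The Minkowski sum of the simplices `Δ_I = conv{e_k : k ∈ I}` for `I ∈ E` equals the
polytope `{x : ∑ x_i = w_E([m]), ∑_{i∈J} x_i ≤ w_E(J) for all nonempty J}`, where
`w_E(J) = #{I ∈ E : I ∩ J ≠ ∅}`. -/
theorem stmt_17 (m : ℕ) (E : Finset (Finset (Fin m)))
    (hE : ∀ I ∈ E, I.Nonempty)
    (w : Finset (Fin m) → ℕ)
    (hw : ∀ J, w J = (E.filter (fun I => (I ∩ J).Nonempty)).card) :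
    ∑ I ∈ E, convexHull ℝ ((fun i => Pi.single i (1 : ℝ)) '' (I : Set (Fin m)))
      = {x : Fin m → ℝ | ∑ i, x i = (w Finset.univ : ℝ) ∧
          ∀ J : Finset (Fin m), J.Nonempty → ∑ i ∈ J, x i ≤ (w J : ℝ)} := by
  classical
  have hwuniv : w Finset.univ = E.card := by
    rw [hw]
    congr 1
    apply Finset.filter_true_of_mem
    intro I hI
    simpa using hE I hI
  ext x
  simp only [Set.mem_setOf_eq]
  constructor
  · intro hx
    rw [Set.mem_finset_sum] at hx
    obtain ⟨y, hy, hsum⟩ := hx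
    have hyp := fun I (hI : I ∈ E) => simplex_mem_props I (hy hI)
    have hxv : ∀ i, x i = ∑ I ∈ E, y I i := fun i => by
      rw [← hsum]; exact (Finset.sum_apply i E y)
    constructor
    · have hcomm : ∑ i, x i = ∑ I ∈ E, ∑ i, y I i := by
        simp_rw [hxv]; exact Finset.sum_comm
      have hone : ∀ I ∈ E, (∑ i, y I i) = 1 := by
        intro I hI
        rw [← (hyp I hI).2.2]
        exact (Finset.sum_subset (Finset.subset_univ I)
          fun i _ hiI => (hyp I hI).2.1 i hiI).symm
      rw [hcomm, Finset.sum_congr rfl hone, hwuniv]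
      simp
    · intro J hJ
      have hcomm : ∑ i ∈ J, x i = ∑ I ∈ E, ∑ i ∈ J, y I i := by
        simp_rw [hxv]; exact Finset.sum_comm
      rw [hcomm, hw J]
      rw [← Finset.sum_boole]
      apply Finset.sum_le_sum
      intro I hI
      by_cases hne : (I ∩ J).Nonempty
      · rw [if_pos hne]
        calc ∑ i ∈ J, y I i = ∑ i ∈ J ∩ I, y I i := by
              refine (Finset.sum_subset Finset.inter_subset_left fun i hiJ hiJI => ?_).symm
              exact (hyp I hI).2.1 i (fun hiI => hiJI (Finset.mem_inter.2 ⟨hiJ, hiI⟩))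
          _ ≤ ∑ i ∈ I, y I i :=
              Finset.sum_le_sum_of_subset_of_nonneg Finset.inter_subset_right
                (fun i _ _ => (hyp I hI).1 i)
          _ = 1 := (hyp I hI).2.2
      · rw [if_neg hne]
        have hz : ∀ i ∈ J, y I i = 0 := fun i hi => (hyp I hI).2.1 i
          (fun hiI => hne ⟨i, Finset.mem_inter.2 ⟨hiI, hi⟩⟩)
        rw [Finset.sum_congr rfl hz]
        simp
  · rintro ⟨h1, h2⟩
    rcases Nat.eq_zero_or_pos m with hm | hm
    · subst hm
      have hEe : E = ∅ := by
        rw [Finset.eq_empty_iff_forall_notMem]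
        intro I hI
        obtain ⟨i, _⟩ := hE I hI
        exact i.elim0
      rw [hEe, Finset.sum_empty]
      have hx0 : x = 0 := Subsingleton.elim x 0
      simp [hx0]
    · by_contra hmem
      obtain ⟨f, u, hfu, hux⟩ :=
        geometric_hahn_banach_closed_point (lhs_compact_convex E).2
          (lhs_compact_convex E).1.isClosed hmem
      set c : Fin m → ℝ := fun i => f (Pi.single i 1) with hc
      have hfx : f x = ∑ i, c i * x i := by
        conv_lhs => rw [pi_eq_sum_univ x]
        rw [map_sum]
        refine Finset.sum_congr rfl fun i _ => ?_
        have hfun : (fun j => if i = j then (1:ℝ) else 0) = Pi.single i 1 := by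
          funext j
          simp [Pi.single_apply, eq_comm]
        rw [map_smul, hfun, smul_eq_mul]
        exact mul_comm (x i) (c i)
      have hFm : Nonempty (Fin m) := ⟨⟨0, hm⟩⟩
      have hmaxex : ∀ I : Finset (Fin m), ∃ j, I ∈ E → j ∈ I ∧ ∀ i ∈ I, c i ≤ c j := by
        intro I
        by_cases hI : I ∈ E
        · obtain ⟨j, hj, hjm⟩ := Finset.exists_max_image I c (hE I hI)
          exact ⟨j, fun _ => ⟨hj, hjm⟩⟩
        · exact ⟨Classical.arbitrary (Fin m), fun h => absurd h hI⟩
      choose a ha using hmaxex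
      have haI : ∀ I ∈ E, a I ∈ I := fun I hI => (ha I hI).1
      have hamax : ∀ I ∈ E, ∀ i ∈ I, c i ≤ c (a I) := fun I hI => (ha I hI).2
      set y : Fin m → ℝ := ∑ I ∈ E, Pi.single (a I) (1:ℝ) with hy
      have hymem : y ∈ ∑ I ∈ E,
          convexHull ℝ ((fun i => Pi.single i (1 : ℝ)) '' (I : Set (Fin m))) := by
        apply Set.finset_sum_mem_finset_sum
        intro I hI
        exact subset_convexHull ℝ _ ⟨a I, Finset.mem_coe.2 (haI I hI), rfl⟩
      have hfy : f y = ∑ I ∈ E, c (a I) := by rw [hy, map_sum]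
      have hkey := key_ineq hm E hE w hw c x h1 h2 a haI hamax
      have hlt := hfu y hymem
      rw [hfy] at hlt
      rw [hfx] at hux
      linarith
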